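/- For every even integer k ≥ 2 and every τ in the complex upper half-plane ℍ, one has F̄_k(τ + 1) = Ē_k(τ), i.e. 2^{−(k−1)} F_k((τ+1)/2) − F_k(τ+1) = 2^{−(k−1)} E_k(τ/2) − E_k(τ). -/

import Mathlib

open Complex Real

/-- The Eisenstein series
`E_k(τ) = -B_k/k! + (2/(k-1)!) ∑_{n ≥ 1} σ_{k-1}(n) e^{2πinτ}`,
where `B_k` is the k-th Bernoulli number and `σ_{k-1}` the divisor sum. -/
noncomputable def Eis (k : ℕ) (τ : ℂ) : ℂ :=
  -((bernoulli k : ℚ) : ℂ) / (Nat.factorial k : ℂ) +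
    2 / (Nat.factorial (k - 1) : ℂ) *
      ∑' n : ℕ, ((∑ d ∈ (n + 1).divisors, d ^ (k - 1) : ℕ) : ℂ) *
        Complex.exp (2 * (π : ℂ) * Complex.I * ((n : ℂ) + 1) * τ)

/-- The level-2 Eisenstein series `F_k(τ) = 2 E_k(2τ) - E_k(τ)`. -/
noncomputable def Fis (k : ℕ) (τ : ℂ) : ℂ := 2 * Eis k (2 * τ) - Eis k τ

/-- `Ē_k(τ) = 2^{-(k-1)} E_k(τ/2) - E_k(τ)`. -/
noncomputable def Ebar (k : ℕ) (τ : ℂ) : ℂ :=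
  (2 : ℂ) ^ (-((k : ℤ) - 1)) * Eis k (τ / 2) - Eis k τ

/-- `F̄_k(τ) = 2^{-(k-1)} F_k(τ/2) - F_k(τ)`. -/
noncomputable def Fbar (k : ℕ) (τ : ℂ) : ℂ :=
  (2 : ℂ) ^ (-((k : ℤ) - 1)) * Fis k (τ / 2) - Fis k τ


namespace FbarAux

/-- divisor power sum -/
def sig (j n : ℕ) : ℕ := ∑ d ∈ n.divisors, d ^ j

lemma filter_odd (j M : ℕ) :
    ∑ d ∈ ((2*M).divisors.filter (fun d => ¬ 2 ∣ d)), d ^ j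
      = ∑ d ∈ (M.divisors.filter (fun d => ¬ 2 ∣ d)), d ^ j := by
  congr 1
  ext d
  simp only [Finset.mem_filter, Nat.mem_divisors]
  constructor
  · rintro ⟨⟨hd, hM⟩, hodd⟩
    have hcop : Nat.Coprime d 2 :=
      Nat.coprime_comm.mp ((Nat.prime_two.coprime_iff_not_dvd).2 hodd)
    refine ⟨⟨hcop.dvd_of_dvd_mul_left hd, by omega⟩, hodd⟩
  · rintro ⟨⟨hd, hM⟩, hodd⟩
    exact ⟨⟨hd.mul_left 2, by omega⟩, hodd⟩

lemma filter_even (M : ℕ) (hM : M ≠ 0) :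
    ((2*M).divisors.filter (fun d => 2 ∣ d)) = M.divisors.image (fun d => 2*d) := by
  ext d
  simp only [Finset.mem_filter, Nat.mem_divisors, Finset.mem_image]
  constructor
  · rintro ⟨⟨hd, h0⟩, e, rfl⟩
    exact ⟨e, ⟨(mul_dvd_mul_iff_left (by norm_num : (2:ℕ) ≠ 0)).1 hd, hM⟩, rfl⟩
  · rintro ⟨e, ⟨he, h0⟩, rfl⟩
    exact ⟨⟨mul_dvd_mul_left 2 he, by omega⟩, ⟨e, rfl⟩⟩

lemma splitA (j M : ℕ) (hM : M ≠ 0) :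
    sig j (2*M) = (∑ d ∈ M.divisors.filter (fun d => ¬ 2 ∣ d), d ^ j) + 2^j * sig j M := by
  rw [sig, ← Finset.sum_filter_add_sum_filter_not (2*M).divisors (fun d => 2 ∣ d)]
  rw [filter_even M hM, filter_odd j M,
    Finset.sum_image (by intro a _ b _ h; dsimp only at h; omega)]
  simp only [mul_pow, ← Finset.mul_sum, sig]
  ring

lemma key (j N : ℕ) (hN : N ≠ 0) :
    sig j (2*N) + 2^j * (if 2 ∣ N then sig j (N/2) else 0) = sig j N + 2^j * sig j N := by
  by_cases h2 : 2 ∣ N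
  · obtain ⟨P, rfl⟩ := h2
    have hP : P ≠ 0 := by omega
    rw [if_pos ⟨P, rfl⟩]
    have h1 := splitA j (2*P) (by omega)
    have h2 := splitA j P hP
    have h3 := filter_odd j P
    have h4 : (2*P)/2 = P := by omega
    rw [h4]
    omega
  · rw [if_neg h2]
    have h1 := splitA j N hN
    have h2 : (N.divisors.filter (fun d => ¬ 2 ∣ d)) = N.divisors := by
      apply Finset.filter_true_of_mem
      intro d hd hdd
      exact h2 (dvd_trans hdd (Nat.dvd_of_mem_divisors hd))
    rw [h2] at h1
    have h5 : (∑ d ∈ N.divisors, d ^ j) = sig j N := rfl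
    omega

lemma sig_le (j N : ℕ) : sig j N ≤ N ^ (j+1) := by
  rcases Nat.eq_zero_or_pos N with rfl | hN
  · simp [sig]
  calc sig j N ≤ ∑ _d ∈ N.divisors, N ^ j := by
        apply Finset.sum_le_sum
        intro d hd
        exact Nat.pow_le_pow_left (Nat.divisor_le hd) j
    _ = N.divisors.card * N ^ j := by rw [Finset.sum_const, smul_eq_mul]
    _ ≤ N * N ^ j := by
        apply Nat.mul_le_mul_right
        have : N.divisors ⊆ Finset.Icc 1 N := by
          intro d hd
          simp only [Finset.mem_Icc]
          exact ⟨Nat.pos_of_mem_divisors hd, Nat.divisor_le hd⟩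
        calc N.divisors.card ≤ (Finset.Icc 1 N).card := Finset.card_le_card this
          _ = N := by rw [Nat.card_Icc]; omega
    _ = N ^ (j+1) := by ring

lemma summable_aux {z : ℂ} (hz : ‖z‖ < 1) (c : ℕ → ℕ) (K : ℕ) (hc : ∀ n, c n ≤ (n+1)^K) :
    Summable fun n => (c n : ℂ) * z ^ (n+1) := by
  apply Summable.of_norm_bounded (g := fun n => ((n+1 : ℕ) : ℝ)^K * ‖z‖^(n+1))
  · have h := summable_pow_mul_geometric_of_norm_lt_one (R := ℝ) K (r := ‖z‖) (by rw [Real.norm_eq_abs, _root_.abs_of_nonneg (norm_nonneg z)]; exact hz)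
    exact ((summable_nat_add_iff 1).2 h).congr (fun n => by push_cast; ring)
  · intro n
    rw [norm_mul, norm_pow, Complex.norm_natCast]
    apply mul_le_mul_of_nonneg_right _ (by positivity)
    exact_mod_cast hc n


def hfun (j m : ℕ) : ℕ := if 2 ∣ (m+1) then sig j ((m+1)/2) else 0

noncomputable def Sf (j : ℕ) (z : ℂ) : ℂ := ∑' n : ℕ, (sig j (n+1) : ℂ) * z ^ (n+1)

noncomputable def g (k : ℕ) (z : ℂ) : ℂ :=
  -((bernoulli k : ℚ) : ℂ) / (Nat.factorial k : ℂ) +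
    2 / (Nat.factorial (k - 1) : ℂ) * Sf (k-1) z

lemma summable_sig {k : ℕ} (hk : 1 ≤ k) {z : ℂ} (hz : ‖z‖ < 1) :
    Summable fun n => (sig (k-1) (n+1) : ℂ) * z ^ (n+1) :=
  summable_aux hz _ k (fun n => (sig_le (k-1) (n+1)).trans
    (Nat.pow_le_pow_right (by omega) (by omega)))

set_option maxHeartbeats 1000000 in
lemma main (k : ℕ) (hk : 2 ≤ k) (x : ℂ) (hx : ‖x‖ < 1) :
    (2:ℂ)^(-((k:ℤ)-1)) * (2 * g k (x^2) - g k (-x)) - (2 * g k (x^4) - g k (x^2))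
      = (2:ℂ)^(-((k:ℤ)-1)) * g k x - g k (x^2) := by
  have hk1 : 1 ≤ k := by omega
  set j := k - 1 with hj
  set t : ℂ := (2:ℂ)^(-((k:ℤ)-1)) with htdef
  have hkj : (k:ℤ) - 1 = (j:ℤ) := by omega
  have ht : t * 2^j = 1 := by
    rw [htdef, hkj, zpow_neg, zpow_natCast]
    exact inv_mul_cancel₀ (pow_ne_zero _ two_ne_zero)
  have hx2 : ‖x^2‖ < 1 := by
    rw [norm_pow]; exact pow_lt_one₀ (norm_nonneg x) hx (by norm_num)
  have hx4 : ‖x^4‖ < 1 := by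
    rw [norm_pow]; exact pow_lt_one₀ (norm_nonneg x) hx (by norm_num)
  have hnx : ‖-x‖ < 1 := by rwa [norm_neg]
  have hsum : ∀ {z : ℂ}, ‖z‖ < 1 → Summable fun n => (sig j (n+1) : ℂ) * z ^ (n+1) :=
    fun hz => summable_sig hk1 hz
  -- step 1
  have step1 : Sf j x + Sf j (-x) = ∑' m : ℕ, 2 * (sig j (2*m+2) : ℂ) * (x^2) ^ (m+1) := by
    rw [Sf, Sf, ← Summable.tsum_add (hsum hx) (hsum hnx)]
    have hf : Summable (fun n => (sig j (n+1) : ℂ) * x ^ (n+1) + (sig j (n+1) : ℂ) * (-x) ^ (n+1)) :=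
      (hsum hx).add (hsum hnx)
    rw [← tsum_even_add_odd (f := fun n => (sig j (n+1) : ℂ) * x ^ (n+1) + (sig j (n+1) : ℂ) * (-x) ^ (n+1))
      (hf.comp_injective (i := fun m : ℕ => 2*m) (fun a b h => by dsimp at h; omega))
      (hf.comp_injective (i := fun m : ℕ => 2*m+1) (fun a b h => by dsimp at h; omega))]
    have he : ∀ m : ℕ, (sig j (2*m+1) : ℂ) * x ^ (2*m+1) + (sig j (2*m+1) : ℂ) * (-x) ^ (2*m+1) = 0 := by
      intro m
      rw [Odd.neg_pow ⟨m, by ring⟩]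
      ring
    have ho : ∀ m : ℕ, (sig j (2*m+1+1) : ℂ) * x ^ (2*m+1+1) + (sig j (2*m+1+1) : ℂ) * (-x) ^ (2*m+1+1)
        = 2 * (sig j (2*m+2) : ℂ) * (x^2) ^ (m+1) := by
      intro m
      rw [Even.neg_pow ⟨m+1, by ring⟩]
      rw [show (x^2) ^ (m+1) = x ^ (2*m+1+1) by rw [← pow_mul]; ring_nf]
      ring_nf
    rw [tsum_congr he, tsum_congr ho, tsum_zero, zero_add]
  -- step 2
  have step2 : ∀ m : ℕ, t * (sig j (2*m+2) : ℂ) = (t+1) * (sig j (m+1) : ℂ) - (hfun j m : ℂ) := by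
    intro m
    have hkey := key j (m+1) (by omega)
    have hc : (sig j (2*(m+1)) : ℂ) + (2:ℂ)^j * (hfun j m : ℂ)
        = (sig j (m+1) : ℂ) + (2:ℂ)^j * (sig j (m+1) : ℂ) := by
      rw [hfun]
      push_cast [apply_ite (Nat.cast : ℕ → ℂ)]
      exact_mod_cast congrArg (Nat.cast : ℕ → ℂ) hkey
    have h2m : 2*m+2 = 2*(m+1) := by ring
    rw [h2m]
    linear_combination t * hc + ((sig j (m+1) : ℂ) - (hfun j m : ℂ)) * ht
  -- hfun summable
  have hfle : ∀ m, hfun j m ≤ (m+1)^k := by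
    intro m
    rw [hfun]
    split_ifs
    · exact (sig_le j _).trans ((Nat.pow_le_pow_left (Nat.div_le_self _ _) _).trans
        (Nat.pow_le_pow_right (by omega) (by omega)))
    · positivity
  have hhs : Summable fun m => (hfun j m : ℂ) * (x^2) ^ (m+1) := summable_aux hx2 _ k hfle
  -- step 3
  have step3 : ∑' m : ℕ, (hfun j m : ℂ) * (x^2) ^ (m+1) = Sf j (x^4) := by
    rw [Sf, ← tsum_even_add_odd (f := fun m => (hfun j m : ℂ) * (x^2) ^ (m+1))
      (hhs.comp_injective (i := fun m : ℕ => 2*m) (fun a b h => by dsimp at h; omega))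
      (hhs.comp_injective (i := fun m : ℕ => 2*m+1) (fun a b h => by dsimp at h; omega))]
    have he : ∀ m : ℕ, (hfun j (2*m) : ℂ) * (x^2) ^ (2*m+1) = 0 := by
      intro m
      have h1 : ¬ (2 ∣ (2*m+1)) := by omega
      rw [hfun, if_neg h1]
      simp
    have ho : ∀ m : ℕ, (hfun j (2*m+1) : ℂ) * (x^2) ^ (2*m+1+1) = (sig j (m+1) : ℂ) * (x^4) ^ (m+1) := by
      intro m
      have h1 : (2 : ℕ) ∣ (2*m+1+1) := ⟨m+1, by ring⟩
      have h2 : (2*m+1+1)/2 = m+1 := by omega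
      rw [hfun, if_pos h1, h2,
        show (x^2) ^ (2*m+1+1) = (x^4)^(m+1) by rw [← pow_mul, ← pow_mul]; ring_nf]
    rw [tsum_congr he, tsum_congr ho, tsum_zero, zero_add]
  -- combine
  have key2 : t * (Sf j x + Sf j (-x)) = 2*(t+1) * Sf j (x^2) - 2 * Sf j (x^4) := by
    rw [step1, ← step3, ← tsum_mul_left]
    have hsub : Summable fun m => (t+1) * ((sig j (m+1) : ℂ) * (x^2) ^ (m+1)) :=
      (hsum hx2).mul_left _
    calc ∑' m : ℕ, t * (2 * (sig j (2*m+2) : ℂ) * (x^2) ^ (m+1))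
        = ∑' m : ℕ, 2 * ((t+1) * ((sig j (m+1) : ℂ) * (x^2) ^ (m+1)) - (hfun j m : ℂ) * (x^2) ^ (m+1)) := by
          apply tsum_congr
          intro m
          linear_combination 2 * ((x^2)^(m+1)) * step2 m
      _ = 2 * ((t+1) * Sf j (x^2) - ∑' m : ℕ, (hfun j m : ℂ) * (x^2) ^ (m+1)) := by
          rw [tsum_mul_left, Summable.tsum_sub hsub hhs, tsum_mul_left, Sf]
      _ = 2*(t+1) * Sf j (x^2) - 2 * ∑' m : ℕ, (hfun j m : ℂ) * (x^2) ^ (m+1) := by ring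
  -- finish
  rw [g, g, g, g, ← hj]
  linear_combination (-(2 / (Nat.factorial (k - 1) : ℂ))) * key2

lemma Eis_eq (k : ℕ) (τ : ℂ) : Eis k τ = g k (Complex.exp (2 * (π : ℂ) * Complex.I * τ)) := by
  rw [Eis, g, Sf]
  congr 2
  apply tsum_congr
  intro n
  rw [sig]
  congr 1
  rw [← Complex.exp_nat_mul]
  congr 1
  push_cast
  ring


end FbarAux

theorem Fbar_translation (k : ℕ) (hk : 2 ≤ k) (hke : Even k) (τ : UpperHalfPlane) :
    Fbar k ((τ : ℂ) + 1) = Ebar k (τ : ℂ) := by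
  set τc : ℂ := (τ : ℂ) with hτc
  set x : ℂ := Complex.exp ((π : ℂ) * Complex.I * τc) with hxdef
  have hx : ‖x‖ < 1 := by
    rw [hxdef, Complex.norm_exp]
    have hre : ((π : ℂ) * Complex.I * τc).re = -(π * τc.im) := by
      simp [Complex.mul_re, Complex.mul_im]
    rw [hre]
    apply Real.exp_lt_one_iff.mpr
    have him : 0 < τc.im := τ.2
    have : (0:ℝ) < π := Real.pi_pos
    nlinarith
  have e1 : Complex.exp (2 * (π : ℂ) * Complex.I * (2 * ((τc + 1) / 2))) = x ^ 2 := by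
    rw [show 2 * (π : ℂ) * Complex.I * (2 * ((τc + 1) / 2))
        = ((π : ℂ) * Complex.I * τc + (π : ℂ) * Complex.I * τc) + 2 * (π : ℂ) * Complex.I by ring]
    rw [Complex.exp_add, Complex.exp_add, Complex.exp_two_pi_mul_I, hxdef]
    ring
  have e2 : Complex.exp (2 * (π : ℂ) * Complex.I * ((τc + 1) / 2)) = -x := by
    rw [show 2 * (π : ℂ) * Complex.I * ((τc + 1) / 2)
        = (π : ℂ) * Complex.I * τc + (π : ℂ) * Complex.I by ring]
    rw [Complex.exp_add, Complex.exp_pi_mul_I, hxdef]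
    ring
  have e3 : Complex.exp (2 * (π : ℂ) * Complex.I * (2 * (τc + 1))) = x ^ 4 := by
    rw [show 2 * (π : ℂ) * Complex.I * (2 * (τc + 1))
        = ((π : ℂ) * Complex.I * τc + (π : ℂ) * Complex.I * τc
          + ((π : ℂ) * Complex.I * τc + (π : ℂ) * Complex.I * τc))
          + (2 * (π : ℂ) * Complex.I + 2 * (π : ℂ) * Complex.I) by ring]
    simp only [Complex.exp_add, Complex.exp_two_pi_mul_I, hxdef]
    ring
  have e4 : Complex.exp (2 * (π : ℂ) * Complex.I * (τc + 1)) = x ^ 2 := by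
    rw [show 2 * (π : ℂ) * Complex.I * (τc + 1)
        = ((π : ℂ) * Complex.I * τc + (π : ℂ) * Complex.I * τc) + 2 * (π : ℂ) * Complex.I by ring]
    rw [Complex.exp_add, Complex.exp_add, Complex.exp_two_pi_mul_I, hxdef]
    ring
  have e5 : Complex.exp (2 * (π : ℂ) * Complex.I * (τc / 2)) = x := by
    rw [show 2 * (π : ℂ) * Complex.I * (τc / 2) = (π : ℂ) * Complex.I * τc by ring, hxdef]
  have e6 : Complex.exp (2 * (π : ℂ) * Complex.I * τc) = x ^ 2 := by
    rw [show 2 * (π : ℂ) * Complex.I * τc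
        = (π : ℂ) * Complex.I * τc + (π : ℂ) * Complex.I * τc by ring]
    rw [Complex.exp_add, hxdef]
    ring
  rw [Fbar, Fis, Fis, Ebar]
  rw [show ((τc + 1) / 2 : ℂ) = (τc + 1) / 2 from rfl]
  rw [FbarAux.Eis_eq, FbarAux.Eis_eq, FbarAux.Eis_eq, FbarAux.Eis_eq, FbarAux.Eis_eq, FbarAux.Eis_eq]
  rw [e1, e2, e3, e4, e5, e6]
  exact FbarAux.main k hk x hx
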